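/- Let B(t,ξ) := DΨ(t,Φ(t,ξ)) DΨ(t,Φ(t,ξ))ᵀ − Ψ̇(t,Φ(t,ξ)) ⊗ Ψ̇(t,Φ(t,ξ)), where Ψ(t,·) and Φ(t,·) are inverse C¹-diffeomorphisms for each t (so Ψ(t,Φ(t,ξ)) = ξ), and assume |Φ̇(t,ξ)|² ≤ 1−δ for some δ > 0 and |DΨ(t,x)ᵀ η|² ≥ c_Ψ |η|² for all η and a constant c_Ψ > 0. Then B(t,ξ) is symmetric and uniformly coercive: (B(t,ξ)η)·η ≥ δ c_Ψ |η|² for every η ∈ ℝ². -/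
import Mathlib


open RealInnerProductSpace

/-- Coercivity of the matrix `B = DΨ DΨᵀ − Ψ̇ ⊗ Ψ̇` when `Ψ̇ = −DΨ Φ̇`,
`|Φ̇|² ≤ 1−δ` and `|DΨᵀη|² ≥ c_Ψ|η|²`: `B` is symmetric and
`(Bη)·η ≥ δ c_Ψ |η|²`. -/
theorem coercivity_of_transformed_matrix
    (δ cΨ : ℝ) (hδ : 0 < δ) (hδ1 : δ ≤ 1) (hcΨ : 0 < cΨ)
    (J : EuclideanSpace ℝ (Fin 2) →L[ℝ] EuclideanSpace ℝ (Fin 2))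
    (phidot psidot : EuclideanSpace ℝ (Fin 2))
    (hpsidot : psidot = -(J phidot))
    (hphidot : ‖phidot‖^2 ≤ 1 - δ)
    (hcoer : ∀ η : EuclideanSpace ℝ (Fin 2),
      cΨ * ‖η‖^2 ≤ ‖(ContinuousLinearMap.adjoint J) η‖^2)
    (B : EuclideanSpace ℝ (Fin 2) → EuclideanSpace ℝ (Fin 2))
    (hB : ∀ η, B η = J ((ContinuousLinearMap.adjoint J) η) - ⟪psidot, η⟫ • psidot) :
    (∀ η₁ η₂ : EuclideanSpace ℝ (Fin 2), ⟪B η₁, η₂⟫ = ⟪η₁, B η₂⟫) ∧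
    (∀ η : EuclideanSpace ℝ (Fin 2), δ * cΨ * ‖η‖^2 ≤ ⟪B η, η⟫) := by
  have key : ∀ η₁ η₂ : EuclideanSpace ℝ (Fin 2),
      ⟪B η₁, η₂⟫ = ⟪(ContinuousLinearMap.adjoint J) η₁, (ContinuousLinearMap.adjoint J) η₂⟫
        - ⟪psidot, η₁⟫ * ⟪psidot, η₂⟫ := by
    intro η₁ η₂
    rw [hB, inner_sub_left, real_inner_smul_left,
      ← ContinuousLinearMap.adjoint_inner_right J]
  constructor
  · intro η₁ η₂
    rw [key, real_inner_comm (B η₂) η₁, key,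
      real_inner_comm ((ContinuousLinearMap.adjoint J) η₂)]
    ring
  · intro η
    have h1 : ⟪psidot, η⟫ = -⟪phidot, (ContinuousLinearMap.adjoint J) η⟫ := by
      rw [hpsidot, inner_neg_left, ContinuousLinearMap.adjoint_inner_right J]
    have h2 := abs_real_inner_le_norm phidot ((ContinuousLinearMap.adjoint J) η)
    have h3 := hcoer η
    have h4 : (0:ℝ) ≤ ‖phidot‖ := norm_nonneg _
    have h5 : (0:ℝ) ≤ ‖(ContinuousLinearMap.adjoint J) η‖ := norm_nonneg _
    have h6 : (0:ℝ) ≤ ‖η‖ := norm_nonneg _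
    rw [key, real_inner_self_eq_norm_sq, h1]
    set x := ⟪phidot, (ContinuousLinearMap.adjoint J) η⟫ with hx
    set n := ‖(ContinuousLinearMap.adjoint J) η‖ with hn
    have h7 : x ^ 2 ≤ (1 - δ) * n ^ 2 := by
      have hx2 : x ^ 2 ≤ (‖phidot‖ * n) ^ 2 := by
        rw [← sq_abs x]; exact pow_le_pow_left₀ (abs_nonneg x) h2 2
      have := mul_le_mul_of_nonneg_right hphidot (sq_nonneg n)
      nlinarith
    nlinarith [mul_le_mul_of_nonneg_left h3 hδ.le]
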